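/- Let F : F_{2^n} → F_{2^n} and define the Walsh transform W_F(u,v) = Σ_{x ∈ F_{2^n}} (−1)^{tr_n(v·F(x)) + tr_n(u·x)}. Then for every integer j ≥ 1, Σ_{a ∈ F_{2^n}} Σ_{b ∈ F_{2^n}, b ≠ 0} |{x : F(x) + bx + a = 0}|^j = 2^{−(j−1)n} · Σ_{b ≠ 0} Σ_{v_1,...,v_j ∈ F_{2^n}, v_1 + ... + v_j = 0} Π_{i=1}^{j} W_F(b·v_i, v_i). -/

import Mathlib

open scoped Classical
open Finset

noncomputable instance (n : ℕ) : Fintype (GaloisField 2 n) := Fintype.ofFinite _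

/-- The absolute trace from `GF(2^n)` to `GF(2)`. -/
noncomputable def tr (n : ℕ) (x : GaloisField 2 n) : ZMod 2 :=
  Algebra.trace (ZMod 2) (GaloisField 2 n) x

/-- The Walsh transform of `F` at `(u, v)`. -/
noncomputable def W (n : ℕ) (F : GaloisField 2 n → GaloisField 2 n)
    (u v : GaloisField 2 n) : ℤ :=
  ∑ x : GaloisField 2 n, (-1 : ℤ) ^ (tr n (v * F x) + tr n (u * x)).val

/-- `F` is an o-polynomial: for every nonzero `b` and every `a`, the equation
`F x + b * x = a` has 0 or 2 solutions. -/
def IsOPoly (n : ℕ) (F : GaloisField 2 n → GaloisField 2 n) : Prop :=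
  ∀ b : GaloisField 2 n, b ≠ 0 → ∀ a : GaloisField 2 n,
    Nat.card {x : GaloisField 2 n // F x + b * x = a} = 0 ∨
    Nat.card {x : GaloisField 2 n // F x + b * x = a} = 2

/- Auxiliary machinery -/

lemma neg_one_pow_mod (a : ℕ) : ((-1:ℚ))^(a % 2) = (-1:ℚ)^a := by
  conv_rhs => rw [← Nat.div_add_mod a 2, pow_add, pow_mul]
  norm_num

lemma zmod2_pow_add (s t : ZMod 2) :
    ((-1:ℚ))^((s+t).val) = ((-1:ℚ))^s.val * ((-1:ℚ))^t.val := by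
  rw [ZMod.val_add, neg_one_pow_mod, pow_add]

lemma zmod2_ne_zero {s : ZMod 2} (h : s ≠ 0) : s.val = 1 := by
  have h1 := ZMod.val_lt s
  have h2 : s.val ≠ 0 := fun hh => h ((ZMod.val_eq_zero s).mp hh)
  omega

/-- The sign character. -/
noncomputable def psi (n : ℕ) (x : GaloisField 2 n) : ℚ := (-1 : ℚ) ^ (tr n x).val

lemma psi_add (n : ℕ) (x y : GaloisField 2 n) :
    psi n (x + y) = psi n x * psi n y := by
  unfold psi tr
  rw [map_add]
  exact zmod2_pow_add _ _

lemma psi_zero (n : ℕ) : psi n 0 = 1 := by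
  unfold psi tr
  rw [map_zero]
  rfl

lemma psi_sum {ι : Type*} (n : ℕ) (s : Finset ι) (g : ι → GaloisField 2 n) :
    psi n (∑ i ∈ s, g i) = ∏ i ∈ s, psi n (g i) := by
  induction s using Finset.cons_induction with
  | empty => simpa using psi_zero n
  | cons i s hi ih => rw [Finset.sum_cons, Finset.prod_cons, psi_add, ih]

lemma card_gf (n : ℕ) (hn : 0 < n) : Fintype.card (GaloisField 2 n) = 2 ^ n := by
  have := GaloisField.card 2 n hn.ne'
  rwa [Nat.card_eq_fintype_card] at this

/-- Character orthogonality. -/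
lemma sum_psi (n : ℕ) (hn : 0 < n) (c : GaloisField 2 n) :
    ∑ a : GaloisField 2 n, psi n (c * a) = if c = 0 then (2:ℚ)^n else 0 := by
  split_ifs with hc
  · subst hc
    simp only [zero_mul, psi_zero, Finset.sum_const, Finset.card_univ, card_gf n hn,
      nsmul_eq_mul, mul_one]
    push_cast
    ring
  · obtain ⟨y, hy⟩ : ∃ y, tr n (c * y) ≠ 0 := by
      by_contra h
      push_neg at h
      have hnd := traceForm_nondegenerate (ZMod 2) (GaloisField 2 n)
      refine hc (hnd.1 c fun y => ?_)
      simpa [Algebra.traceForm_apply, tr] using h y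
    have hpsi : psi n (c * y) = -1 := by
      unfold psi
      rw [zmod2_ne_zero hy, pow_one]
    have key : ∑ a : GaloisField 2 n, psi n (c * a)
        = ∑ a : GaloisField 2 n, psi n (c * (a + y)) :=
      (Fintype.sum_equiv (Equiv.addRight y) _ _ (by intro a; rfl)).symm
    have key2 : ∑ a : GaloisField 2 n, psi n (c * (a + y))
        = - ∑ a : GaloisField 2 n, psi n (c * a) := by
      rw [← Finset.sum_neg_distrib]
      refine Finset.sum_congr rfl fun a _ => ?_
      rw [mul_add, psi_add, hpsi]
      ring
    have := key.trans key2
    linarith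

/-- The Walsh transform, cast to ℚ. -/
lemma W_eq (n : ℕ) (F : GaloisField 2 n → GaloisField 2 n) (u v : GaloisField 2 n) :
    (W n F u v : ℚ) = ∑ x : GaloisField 2 n, psi n (v * F x + u * x) := by
  unfold W
  push_cast
  refine Finset.sum_congr rfl fun x _ => ?_
  rw [psi_add]
  unfold psi
  rw [← zmod2_pow_add]

/-- The counting identity. -/
lemma count_eq (n : ℕ) (hn : 0 < n) (F : GaloisField 2 n → GaloisField 2 n)
    (b a : GaloisField 2 n) :
    (2:ℚ)^n * (Nat.card {x : GaloisField 2 n // F x + b * x + a = 0} : ℚ)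
      = ∑ v : GaloisField 2 n, psi n (v * a) * (W n F (b * v) v : ℚ) := by
  have : ∀ v : GaloisField 2 n, psi n (v * a) * (W n F (b * v) v : ℚ)
      = ∑ x : GaloisField 2 n, psi n (v * (F x + b * x + a)) := by
    intro v
    rw [W_eq, Finset.mul_sum]
    refine Finset.sum_congr rfl fun x _ => ?_
    rw [← psi_add]
    ring_nf
  rw [Finset.sum_congr rfl fun v _ => this v, Finset.sum_comm]
  have : ∀ x : GaloisField 2 n, ∑ v : GaloisField 2 n, psi n (v * (F x + b * x + a))
      = if F x + b * x + a = 0 then (2:ℚ)^n else 0 := by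
    intro x
    rw [← sum_psi n hn]
    exact Finset.sum_congr rfl fun v _ => by rw [mul_comm]
  rw [Finset.sum_congr rfl fun x _ => this x, ← Finset.sum_filter, Finset.sum_const,
    Nat.card_eq_fintype_card, Fintype.card_subtype, nsmul_eq_mul, mul_comm]

theorem power_moment_as_walsh_sum (n : ℕ) (hn : 0 < n)
    (F : GaloisField 2 n → GaloisField 2 n) (j : ℕ) (hj : 1 ≤ j) :
    ∑ a : GaloisField 2 n, ∑ b ∈ univ.filter (fun b : GaloisField 2 n => b ≠ 0),
        (Nat.card {x : GaloisField 2 n // F x + b * x + a = 0} : ℚ) ^ j =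
      (2 : ℚ) ^ (-(((j : ℤ) - 1) * n)) *
        ∑ b ∈ univ.filter (fun b : GaloisField 2 n => b ≠ 0),
          ∑ v ∈ (univ : Finset (Fin j → GaloisField 2 n)).filter
              (fun v => ∑ i, v i = 0),
            ∏ i, (W n F (b * v i) (v i) : ℚ) := by
  set bs := (univ : Finset (GaloisField 2 n)).filter (fun b : GaloisField 2 n => b ≠ 0) with hbs
  set S := ∑ b ∈ bs, ∑ v ∈ (univ : Finset (Fin j → GaloisField 2 n)).filter
      (fun v => ∑ i, v i = 0), ∏ i, (W n F (b * v i) (v i) : ℚ) with hS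
  have hc : ((2:ℚ)^n) ≠ 0 := by positivity
  have key : ((2:ℚ)^n)^j * (∑ a : GaloisField 2 n, ∑ b ∈ bs,
        (Nat.card {x : GaloisField 2 n // F x + b * x + a = 0} : ℚ) ^ j) = (2:ℚ)^n * S := by
    calc ((2:ℚ)^n)^j * (∑ a : GaloisField 2 n, ∑ b ∈ bs,
          (Nat.card {x : GaloisField 2 n // F x + b * x + a = 0} : ℚ) ^ j)
        = ∑ a : GaloisField 2 n, ∑ b ∈ bs,
            ∑ p : Fin j → GaloisField 2 n, ∏ i, (psi n (p i * a) * (W n F (b * p i) (p i) : ℚ)) := by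
          rw [Finset.mul_sum]
          refine Finset.sum_congr rfl fun a _ => ?_
          rw [Finset.mul_sum]
          refine Finset.sum_congr rfl fun b _ => ?_
          rw [← mul_pow, count_eq n hn F b a, Fintype.sum_pow]
      _ = ∑ b ∈ bs, ∑ p : Fin j → GaloisField 2 n,
            (∑ a : GaloisField 2 n, psi n ((∑ i, p i) * a)) * ∏ i, (W n F (b * p i) (p i) : ℚ) := by
          rw [Finset.sum_comm]
          refine Finset.sum_congr rfl fun b _ => ?_
          rw [Finset.sum_comm]
          refine Finset.sum_congr rfl fun p _ => ?_
          rw [Finset.sum_mul]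
          refine Finset.sum_congr rfl fun a _ => ?_
          rw [Finset.prod_mul_distrib, ← psi_sum, ← Finset.sum_mul]
      _ = ∑ b ∈ bs, ∑ p : Fin j → GaloisField 2 n,
            (if (∑ i, p i) = 0 then (2:ℚ)^n else 0) * ∏ i, (W n F (b * p i) (p i) : ℚ) := by
          refine Finset.sum_congr rfl fun b _ => Finset.sum_congr rfl fun p _ => ?_
          rw [sum_psi n hn]
      _ = (2:ℚ)^n * S := by
          rw [hS, Finset.mul_sum]
          refine Finset.sum_congr rfl fun b _ => ?_
          have step : ∑ p : Fin j → GaloisField 2 n,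
                (if ∑ i, p i = 0 then (2:ℚ)^n else 0) * ∏ i, (W n F (b * p i) (p i) : ℚ)
              = ∑ p : Fin j → GaloisField 2 n,
                (if ∑ i, p i = 0 then (2:ℚ)^n * ∏ i, (W n F (b * p i) (p i) : ℚ) else 0) :=
            Finset.sum_congr rfl fun p _ => by rw [ite_mul, zero_mul]
          rw [step, ← Finset.sum_filter, Finset.mul_sum]
  have hpow : (2 : ℚ) ^ (-(((j : ℤ) - 1) * n)) = (2:ℚ)^n / ((2:ℚ)^n)^j := by
    have h1 : (-(((j : ℤ) - 1) * n)) = (n : ℤ) - ((j * n : ℕ) : ℤ) := by push_cast; ring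
    rw [h1, zpow_sub₀ (two_ne_zero), zpow_natCast, zpow_natCast, ← pow_mul, mul_comm j n]
  rw [hpow, div_mul_eq_mul_div, eq_div_iff (pow_ne_zero _ hc), mul_comm _ (((2:ℚ)^n)^j), key]
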